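/- arXiv:2206.05334 — 2 statements merged into one kernel-verified Lean document; each statement's English description precedes it below -/
import Mathlib

section
/- For any real θ and positive integers n, k with 2n ≤ k < 3n, the average (1/n) ∑_{ℓ=0}^{n-1} (cos((θ+ℓπ)/n))^{2k} equals (1/4^k)·[C(2k,k) + 2·C(2k,k−n)·cos(2θ) + 2·C(2k,k−2n)·cos(4θ)]. -/
open Real Finset

lemma geom_aux (n : ℕ) (hn : 0 < n) (m : ℤ) :
    ∑ ℓ ∈ Finset.range n, Complex.exp (2 * (Real.pi:ℂ) * Complex.I * m * ℓ / n)
      = if (n:ℤ) ∣ m then (n : ℂ) else 0 := by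
  have hn' : (n:ℂ) ≠ 0 := Nat.cast_ne_zero.2 hn.ne'
  have hw : ∀ ℓ : ℕ, Complex.exp (2 * (Real.pi:ℂ) * Complex.I * m * ℓ / n)
      = (Complex.exp (2 * (Real.pi:ℂ) * Complex.I * m / n)) ^ ℓ := by
    intro ℓ
    rw [← Complex.exp_nat_mul]
    ring_nf
  simp_rw [hw]
  by_cases h : (n:ℤ) ∣ m
  · obtain ⟨c, rfl⟩ := h
    have he : Complex.exp (2 * (Real.pi:ℂ) * Complex.I * ((n:ℤ)*c : ℤ) / n) = 1 := by
      have h2 : (2 * (Real.pi:ℂ) * Complex.I * (((n:ℤ)*c : ℤ) : ℂ) / n) = (c:ℂ) * (2 * (Real.pi:ℂ) * Complex.I) := by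
        push_cast
        field_simp
      rw [h2]
      exact_mod_cast Complex.exp_int_mul_two_pi_mul_I c
    rw [he]
    simp
  · have h2pi : (2 * (Real.pi:ℂ) * Complex.I) ≠ 0 := by
      simp [Real.pi_ne_zero, Complex.I_ne_zero]
    have hne : Complex.exp (2 * (Real.pi:ℂ) * Complex.I * m / n) ≠ 1 := by
      intro hc
      rw [Complex.exp_eq_one_iff] at hc
      obtain ⟨t, ht⟩ := hc
      rw [div_eq_iff hn'] at ht
      apply h
      refine ⟨t, ?_⟩
      have hcc : (2 * (Real.pi:ℂ) * Complex.I) * m = (2 * (Real.pi:ℂ) * Complex.I) * ((n:ℂ) * t) := by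
        linear_combination ht
      have := mul_left_cancel₀ h2pi hcc
      exact_mod_cast this
    rw [geom_sum_eq hne]
    have hpow : (Complex.exp (2 * (Real.pi:ℂ) * Complex.I * m / n)) ^ n = 1 := by
      rw [← Complex.exp_nat_mul]
      have h3 : (n:ℂ) * (2 * (Real.pi:ℂ) * Complex.I * m / n) = (m:ℂ) * (2 * (Real.pi:ℂ) * Complex.I) := by
        field_simp
      rw [h3]
      exact_mod_cast Complex.exp_int_mul_two_pi_mul_I m
    rw [hpow]
    simp [h]

lemma cos_pow_aux (k : ℕ) (x : ℂ) :
    (Complex.cos x)^(2*k) = (1/4^k) * ∑ j ∈ Finset.range (2*k+1),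
      (Nat.choose (2*k) j : ℂ) * Complex.exp (((2*(j:ℤ)-2*(k:ℤ)) : ℂ) * x * Complex.I) := by
  have h2 : Complex.cos x = (Complex.exp (x*Complex.I) + Complex.exp (-x*Complex.I)) / 2 := by
    rw [← Complex.two_cos]; ring
  rw [h2, div_pow, add_pow]
  have hterm : ∀ j ∈ Finset.range (2*k+1),
      (Complex.exp (x*Complex.I))^j * (Complex.exp (-x*Complex.I))^(2*k - j) * (Nat.choose (2*k) j : ℂ)
      = (Nat.choose (2*k) j : ℂ) * Complex.exp (((2*(j:ℤ)-2*(k:ℤ)) : ℂ) * x * Complex.I) := by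
    intro j hj
    rw [Finset.mem_range] at hj
    have hj' : j ≤ 2*k := by omega
    rw [← Complex.exp_nat_mul, ← Complex.exp_nat_mul, mul_comm]
    rw [← Complex.exp_add]
    congr 1
    push_cast [Nat.cast_sub hj']
    ring
  rw [Finset.sum_congr rfl hterm]
  have h4 : (2:ℂ)^(2*k) = 4^k := by
    rw [pow_mul]; norm_num
  rw [h4]
  ring

lemma key_aux (θ : ℝ) (n k : ℕ) (hn : 0 < n) (h1 : 2*n ≤ k) (h2 : k < 3*n) :
    ∑ ℓ ∈ Finset.range n, (Complex.cos (((θ:ℂ) + ℓ * (Real.pi:ℂ)) / n)) ^ (2*k)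
      = (n:ℂ) * ((1/4^k) * ((Nat.choose (2*k) k : ℂ)
          + 2 * (Nat.choose (2*k) (k-n) : ℂ) * Complex.cos (2*(θ:ℂ))
          + 2 * (Nat.choose (2*k) (k-2*n) : ℂ) * Complex.cos (4*(θ:ℂ)))) := by
  have hn' : (n:ℂ) ≠ 0 := Nat.cast_ne_zero.2 hn.ne'
  simp_rw [cos_pow_aux]
  rw [← Finset.mul_sum, Finset.sum_comm]
  -- split each exponential
  have hsplit : ∀ j ∈ Finset.range (2*k+1), ∀ ℓ ∈ Finset.range n,
      (Nat.choose (2*k) j : ℂ) * Complex.exp (((2*(j:ℤ)-2*(k:ℤ)) : ℂ) * (((θ:ℂ) + ℓ * (Real.pi:ℂ)) / n) * Complex.I)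
      = (Nat.choose (2*k) j : ℂ) * Complex.exp ((2*(((j:ℤ)-(k:ℤ)) : ℂ) * θ / n) * Complex.I)
        * Complex.exp (2 * (Real.pi:ℂ) * Complex.I * (((j:ℤ)-(k:ℤ) : ℤ) : ℂ) * ℓ / n) := by
    intro j _ ℓ _
    rw [mul_assoc ((Nat.choose (2*k) j : ℂ))]
    congr 1
    rw [← Complex.exp_add]
    congr 1
    push_cast
    field_simp
  have hinner : ∀ j ∈ Finset.range (2*k+1),
      ∑ ℓ ∈ Finset.range n, (Nat.choose (2*k) j : ℂ) * Complex.exp (((2*(j:ℤ)-2*(k:ℤ)) : ℂ) * (((θ:ℂ) + ℓ * (Real.pi:ℂ)) / n) * Complex.I)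
      = (Nat.choose (2*k) j : ℂ) * Complex.exp ((2*(((j:ℤ)-(k:ℤ)) : ℂ) * θ / n) * Complex.I)
        * (if (n:ℤ) ∣ ((j:ℤ)-(k:ℤ)) then (n : ℂ) else 0) := by
    intro j hj
    rw [Finset.sum_congr rfl (hsplit j hj), ← Finset.mul_sum, geom_aux n hn ((j:ℤ)-(k:ℤ))]
  rw [Finset.sum_congr rfl hinner]
  -- restrict to the five surviving indices
  set g : ℕ → ℂ := fun j => (Nat.choose (2*k) j : ℂ) * Complex.exp ((2*(((j:ℤ)-(k:ℤ)) : ℂ) * θ / n) * Complex.I)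
        * (if (n:ℤ) ∣ ((j:ℤ)-(k:ℤ)) then (n : ℂ) else 0) with hg
  have hset : ∑ j ∈ Finset.range (2*k+1), g j
      = ∑ j ∈ ({k-2*n, k-n, k, k+n, k+2*n} : Finset ℕ), g j := by
    refine (Finset.sum_subset ?_ ?_).symm
    · intro x hx
      simp only [Finset.mem_insert, Finset.mem_singleton] at hx
      rw [Finset.mem_range]
      rcases hx with h|h|h|h|h <;> omega
    · intro j hjr hjs
      rw [Finset.mem_range] at hjr
      simp only [Finset.mem_insert, Finset.mem_singleton] at hjs
      push_neg at hjs
      have hdvd : ¬ (n:ℤ) ∣ ((j:ℤ)-(k:ℤ)) := by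
        rintro ⟨c, hc⟩
        have hcu : c < 3 := by nlinarith [hc]
        have hcl : -3 < c := by nlinarith [hc]
        interval_cases c <;> omega
      rw [hg]
      simp [hdvd]
  rw [hset]
  -- evaluate the five-element sum
  have e1 : k - 2*n ∉ ({k-n, k, k+n, k+2*n} : Finset ℕ) := by simp; omega
  have e2 : k - n ∉ ({k, k+n, k+2*n} : Finset ℕ) := by simp; omega
  have e3 : k ∉ ({k+n, k+2*n} : Finset ℕ) := by simp; omega
  have e4 : k + n ∉ ({k+2*n} : Finset ℕ) := by simp; omega
  rw [Finset.sum_insert e1, Finset.sum_insert e2, Finset.sum_insert e3, Finset.sum_insert e4,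
    Finset.sum_singleton]
  -- dvd facts matching the goal's casts
  have d1 : (n:ℤ) ∣ (((k - 2*n : ℕ):ℤ) - (k:ℤ)) := ⟨-2, by omega⟩
  have d2 : (n:ℤ) ∣ (((k - n : ℕ):ℤ) - (k:ℤ)) := ⟨-1, by omega⟩
  have d3 : (n:ℤ) ∣ (((k : ℕ):ℤ) - (k:ℤ)) := ⟨0, by omega⟩
  have d4 : (n:ℤ) ∣ (((k + n : ℕ):ℤ) - (k:ℤ)) := ⟨1, by omega⟩
  have d5 : (n:ℤ) ∣ (((k + 2*n : ℕ):ℤ) - (k:ℤ)) := ⟨2, by omega⟩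
  rw [hg]
  simp only [if_pos d1, if_pos d2, if_pos d3, if_pos d4, if_pos d5]
  -- simplify the exponents
  have E1 : (2 * (((((k - 2*n : ℕ):ℤ)):ℂ) - ((((k:ℕ):ℤ)):ℂ)) * (θ:ℂ) / (n:ℂ) * Complex.I) = -(4*(θ:ℂ))*Complex.I := by
    push_cast [Nat.cast_sub (show 2*n ≤ k by omega)]
    field_simp
    ring
  have E2 : (2 * (((((k - n : ℕ):ℤ)):ℂ) - ((((k:ℕ):ℤ)):ℂ)) * (θ:ℂ) / (n:ℂ) * Complex.I) = -(2*(θ:ℂ))*Complex.I := by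
    push_cast [Nat.cast_sub (show n ≤ k by omega)]
    field_simp
    ring
  have E3 : (2 * ((((((k:ℕ)):ℤ)):ℂ) - ((((k:ℕ):ℤ)):ℂ)) * (θ:ℂ) / (n:ℂ) * Complex.I) = 0 := by
    push_cast
    ring
  have E4 : (2 * (((((k + n : ℕ):ℤ)):ℂ) - ((((k:ℕ):ℤ)):ℂ)) * (θ:ℂ) / (n:ℂ) * Complex.I) = (2*(θ:ℂ))*Complex.I := by
    push_cast
    field_simp
    ring
  have E5 : (2 * (((((k + 2*n : ℕ):ℤ)):ℂ) - ((((k:ℕ):ℤ)):ℂ)) * (θ:ℂ) / (n:ℂ) * Complex.I) = (4*(θ:ℂ))*Complex.I := by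
    push_cast
    field_simp
    ring
  rw [E1, E2, E3, E4, E5, Complex.exp_zero]
  -- choose symmetry
  have s4 : Nat.choose (2*k) (k+n) = Nat.choose (2*k) (k-n) := by
    rw [← Nat.choose_symm (by omega : k+n ≤ 2*k)]
    congr 1; omega
  have s5 : Nat.choose (2*k) (k+2*n) = Nat.choose (2*k) (k-2*n) := by
    rw [← Nat.choose_symm (by omega : k+2*n ≤ 2*k)]
    congr 1; omega
  rw [s4, s5]
  have t2 : Complex.exp ((2*(θ:ℂ))*Complex.I) + Complex.exp (-(2*(θ:ℂ))*Complex.I) = 2 * Complex.cos (2*(θ:ℂ)) := (Complex.two_cos _).symm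
  have t4 : Complex.exp ((4*(θ:ℂ))*Complex.I) + Complex.exp (-(4*(θ:ℂ))*Complex.I) = 2 * Complex.cos (4*(θ:ℂ)) := (Complex.two_cos _).symm
  linear_combination ((n:ℂ)/4^k) * (Nat.choose (2*k) (k-n) : ℂ) * t2 + ((n:ℂ)/4^k) * (Nat.choose (2*k) (k-2*n) : ℂ) * t4

theorem stmt_2 (θ : ℝ) (n k : ℕ) (hn : 0 < n) (h1 : 2 * n ≤ k) (h2 : k < 3 * n) :
    (1 / (n : ℝ)) * ∑ ℓ ∈ Finset.range n, (Real.cos ((θ + ℓ * Real.pi) / n)) ^ (2 * k)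
      = (1 / 4 ^ k) * ((Nat.choose (2 * k) k : ℝ)
          + 2 * (Nat.choose (2 * k) (k - n) : ℝ) * Real.cos (2 * θ)
          + 2 * (Nat.choose (2 * k) (k - 2 * n) : ℝ) * Real.cos (4 * θ)) := by
  have hn' : (n:ℝ) ≠ 0 := Nat.cast_ne_zero.2 hn.ne'
  have hkey := key_aux θ n k hn h1 h2
  have hreal : ∑ ℓ ∈ Finset.range n, (Real.cos ((θ + ℓ * Real.pi) / n)) ^ (2*k)
      = (n:ℝ) * ((1/4^k) * ((Nat.choose (2*k) k : ℝ)
          + 2 * (Nat.choose (2*k) (k-n) : ℝ) * Real.cos (2*θ)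
          + 2 * (Nat.choose (2*k) (k-2*n) : ℝ) * Real.cos (4*θ))) := by
    apply Complex.ofReal_injective
    push_cast [Complex.ofReal_cos]
    exact hkey
  rw [hreal, ← mul_assoc, one_div, inv_mul_cancel₀ hn', one_mul]
end

section
/- For every positive integer n, (1/n)·∑_{ℓ=0}^{n-1} (cos((1+6ℓ)π/(6n)))^{2n} = (1/4^n)·[C(2n,n) + 1]. -/
open Real Finset Complex

noncomputable def cc (n k : ℕ) : ℂ := (k : ℂ) - ((2 * n - k : ℕ) : ℂ)
noncomputable def AA (n k : ℕ) : ℂ := Complex.exp (cc n k * (Real.pi : ℂ) * I / (6 * n))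
noncomputable def BB (n k : ℕ) : ℂ := Complex.exp (cc n k * (Real.pi : ℂ) * I / n)

private lemma key_sum (n : ℕ) (hn : 0 < n) :
    ∑ ℓ ∈ Finset.range n,
      (Complex.cos ((1 + 6 * (ℓ : ℂ)) * (Real.pi : ℂ) / (6 * (n : ℂ)))) ^ (2 * n)
    = (n : ℂ) * ((Nat.choose (2 * n) n : ℂ) + 1) / 4 ^ n := by
  have hπ : (Real.pi : ℂ) ≠ 0 := by exact_mod_cast Real.pi_ne_zero
  have hn0 : (n : ℂ) ≠ 0 := Nat.cast_ne_zero.mpr hn.ne'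
  set P : ℂ := (Real.pi : ℂ) with hP
  -- Step 1: binomial expansion of cos^(2n)
  have step1 : ∀ ℓ : ℕ, (Complex.cos ((1 + 6 * (ℓ : ℂ)) * P / (6 * n))) ^ (2 * n)
      = (∑ k ∈ Finset.range (2 * n + 1),
          AA n k * BB n k ^ ℓ * (Nat.choose (2 * n) k : ℂ)) / 4 ^ n := by
    intro ℓ
    set θ : ℂ := (1 + 6 * (ℓ : ℂ)) * P / (6 * n) with hθ
    have hcos : Complex.cos θ = (Complex.exp (θ * I) + Complex.exp (-θ * I)) / 2 := rfl
    rw [hcos, div_pow, add_pow]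
    have h4 : ((2 : ℂ)) ^ (2 * n) = 4 ^ n := by rw [pow_mul]; norm_num
    rw [h4]
    congr 1
    refine Finset.sum_congr rfl fun k hk => ?_
    rw [Finset.mem_range, Nat.lt_succ_iff] at hk
    have hBk : BB n k ^ ℓ = Complex.exp ((ℓ : ℂ) * (cc n k * P * I / n)) := by
      rw [BB, ← Complex.exp_nat_mul]
    rw [← Complex.exp_nat_mul, ← Complex.exp_nat_mul, ← Complex.exp_add, AA, hBk,
      ← Complex.exp_add]
    congr 2
    have hsub : ((2 * n - k : ℕ) : ℂ) = 2 * n - k := by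
      push_cast [Nat.cast_sub hk]; ring
    rw [cc, hθ]
    simp only [hsub]
    field_simp
    ring
  -- B k = 1 for the special values
  have hBone : ∀ k, k = 0 ∨ k = n ∨ k = 2 * n → BB n k = 1 := by
    rintro k (rfl | hk | rfl)
    · have h0 : cc n 0 * P * I / n = ((-1 : ℤ) : ℂ) * (2 * P * I) := by
        rw [cc, Nat.sub_zero]; push_cast; field_simp; ring
      rw [BB, h0, Complex.exp_int_mul_two_pi_mul_I]
    · rw [hk]
      have h0 : cc n n * P * I / n = 0 := by
        rw [cc, show 2 * n - n = n from by omega]; simp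
      rw [BB, h0, Complex.exp_zero]
    · have h0 : cc n (2 * n) * P * I / n = ((1 : ℤ) : ℂ) * (2 * P * I) := by
        rw [cc, show 2 * n - 2 * n = 0 from by omega]; push_cast; field_simp; ring
      rw [BB, h0, Complex.exp_int_mul_two_pi_mul_I]
  -- Step 2: geometric sums
  have hG : ∀ k ≤ 2 * n, ∑ ℓ ∈ Finset.range n, BB n k ^ ℓ
      = if k = 0 ∨ k = n ∨ k = 2 * n then (n : ℂ) else 0 := by
    intro k hk
    by_cases h : k = 0 ∨ k = n ∨ k = 2 * n
    · rw [if_pos h, hBone k h]; simp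
    · rw [if_neg h]
      push_neg at h
      obtain ⟨h0, hn', h2n⟩ := h
      have hBn1 : BB n k ^ n = 1 := by
        rw [BB, ← Complex.exp_nat_mul]
        have harg : (n : ℂ) * (cc n k * P * I / n) = (((k : ℤ) - n : ℤ) : ℂ) * (2 * P * I) := by
          rw [cc]
          push_cast [Nat.cast_sub hk]
          field_simp
          ring
        rw [harg, Complex.exp_int_mul_two_pi_mul_I]
      have hBne : BB n k ≠ 1 := by
        intro hB1
        rw [BB, Complex.exp_eq_one_iff] at hB1
        obtain ⟨m, hm⟩ := hB1
        have hck : cc n k = 2 * (k : ℂ) - 2 * n := by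
          rw [cc]; push_cast [Nat.cast_sub hk]; ring
        rw [hck] at hm
        have h2PI : (2 : ℂ) * P * I ≠ 0 := by
          simp [hπ, Complex.I_ne_zero]
        field_simp at hm
        have hkey : (k : ℂ) = ((m : ℂ) + 1) * n := by
          apply mul_left_cancel₀ h2PI
          linear_combination (2 * P * I) * hm
        have hkZ : (k : ℤ) = (m + 1) * n := by
          have : ((k : ℤ) : ℂ) = (((m + 1) * n : ℤ) : ℂ) := by push_cast; linear_combination hkey
          exact_mod_cast this
        have hj0 : 0 ≤ m + 1 := by nlinarith [Int.ofNat_nonneg k, Int.natCast_pos.mpr hn]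
        have hj2 : m + 1 ≤ 2 := by
          nlinarith [Int.natCast_pos.mpr hn, show (k : ℤ) ≤ 2 * n by exact_mod_cast hk]
        have hm3 : m = -1 ∨ m = 0 ∨ m = 1 := by omega
        rcases hm3 with rfl | rfl | rfl <;> omega
      rw [geom_sum_eq hBne, hBn1, sub_self, zero_div]
  -- Step 3: assemble
  have swap : ∑ ℓ ∈ Finset.range n,
      (Complex.cos ((1 + 6 * (ℓ : ℂ)) * P / (6 * n))) ^ (2 * n)
      = (∑ k ∈ Finset.range (2 * n + 1),
          AA n k * (Nat.choose (2 * n) k : ℂ) *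
            (if k = 0 ∨ k = n ∨ k = 2 * n then (n : ℂ) else 0)) / 4 ^ n := by
    rw [Finset.sum_congr rfl fun ℓ _ => step1 ℓ, ← Finset.sum_div]
    congr 1
    rw [Finset.sum_comm]
    refine Finset.sum_congr rfl fun k hk => ?_
    rw [Finset.mem_range, Nat.lt_succ_iff] at hk
    rw [← hG k hk, Finset.mul_sum]
    exact Finset.sum_congr rfl fun ℓ _ => by ring
  rw [swap]
  congr 1
  -- evaluate the sum over {0, n, 2n}
  have hsub : ({0, n, 2 * n} : Finset ℕ) ⊆ Finset.range (2 * n + 1) := by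
    intro k hk
    simp only [Finset.mem_insert, Finset.mem_singleton] at hk
    rcases hk with rfl | rfl | rfl <;> simp [Finset.mem_range] <;> omega
  rw [← Finset.sum_subset hsub (by
    intro k _ hk
    simp only [Finset.mem_insert, Finset.mem_singleton] at hk
    push_neg at hk
    rw [if_neg (by tauto), mul_zero])]
  have h0n : (0 : ℕ) ∉ ({n, 2 * n} : Finset ℕ) := by simp; omega
  have hn2n : n ∉ ({2 * n} : Finset ℕ) := by simp; omega
  rw [show ({0, n, 2 * n} : Finset ℕ) = insert 0 (insert n {2 * n}) from rfl,
    Finset.sum_insert h0n, Finset.sum_insert hn2n, Finset.sum_singleton]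
  have hA0 : AA n 0 = Complex.exp (-(P * I / 3)) := by
    rw [AA, cc, Nat.sub_zero]
    congr 1
    push_cast
    field_simp
    ring
  have hAn : AA n n = 1 := by
    rw [AA, cc, show 2 * n - n = n from by omega]
    simp
  have hA2n : AA n (2 * n) = Complex.exp (P * I / 3) := by
    rw [AA, cc, show 2 * n - 2 * n = 0 from by omega]
    congr 1
    push_cast
    field_simp
    ring
  have hexp : Complex.exp (P * I / 3) + Complex.exp (-(P * I / 3)) = 1 := by
    have e1 : P * I / 3 = (P / 3) * I := by ring
    have e2 : -(P * I / 3) = -(P / 3) * I := by ring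
    have hcos3 : Complex.cos (P / 3) = 1 / 2 := by
      rw [hP, show ((Real.pi : ℂ)) / 3 = ((Real.pi / 3 : ℝ) : ℂ) from by push_cast; ring,
        ← Complex.ofReal_cos, Real.cos_pi_div_three]
      norm_num
    have hdef : Complex.cos (P / 3)
        = (Complex.exp ((P / 3) * I) + Complex.exp (-(P / 3) * I)) / 2 := rfl
    rw [e2, e1]
    rw [hcos3] at hdef
    linear_combination -2 * hdef
  rw [if_pos (by tauto), if_pos (by tauto), if_pos (by tauto), hA0, hAn, hA2n]
  rw [Nat.choose_zero_right, Nat.choose_self]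
  push_cast
  linear_combination (n : ℂ) * hexp
theorem stmt_5 (n : ℕ) (hn : 0 < n) :
    (1 / (n : ℝ)) * ∑ ℓ ∈ Finset.range n,
        (Real.cos ((1 + 6 * ℓ) * Real.pi / (6 * n))) ^ (2 * n)
      = (1 / 4 ^ n) * ((Nat.choose (2 * n) n : ℝ) + 1) := by
  have hn0 : (n : ℝ) ≠ 0 := Nat.cast_ne_zero.mpr hn.ne'
  have h := key_sum n hn
  have hcast : ((∑ ℓ ∈ Finset.range n,
      (Real.cos ((1 + 6 * ℓ) * Real.pi / (6 * n))) ^ (2 * n) : ℝ) : ℂ)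
      = ∑ ℓ ∈ Finset.range n,
        (Complex.cos ((1 + 6 * (ℓ : ℂ)) * (Real.pi : ℂ) / (6 * (n : ℂ)))) ^ (2 * n) := by
    push_cast
    rfl
  have hR : ∑ ℓ ∈ Finset.range n,
      (Real.cos ((1 + 6 * ℓ) * Real.pi / (6 * n))) ^ (2 * n)
      = (n : ℝ) * ((Nat.choose (2 * n) n : ℝ) + 1) / 4 ^ n := by
    have h2 : ((∑ ℓ ∈ Finset.range n,
        (Real.cos ((1 + 6 * ℓ) * Real.pi / (6 * n))) ^ (2 * n) : ℝ) : ℂ)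
        = (((n : ℝ) * ((Nat.choose (2 * n) n : ℝ) + 1) / 4 ^ n : ℝ) : ℂ) := by
      rw [hcast, h]; push_cast; ring
    exact_mod_cast h2
  rw [hR]
  field_simp
end
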